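/- Let θ = ⟨k; r̄⟩ be a mirrored congruence of L_n and δ a congruence of frequency 2 (so a δ b iff a = b or a + b = n). Then θ and δ permute: θ ∘ δ = δ ∘ θ. -/

import Mathlib

/-- The accessibility relation of the line `L_n`: universe `{0,…,n}`, `x R y ↔ |x-y| ≤ 1`. -/
def lineR (n x y : ℕ) : Prop := x ≤ n ∧ y ≤ n ∧ x ≤ y + 1 ∧ y ≤ x + 1

/-- A congruence of the line `L_n`: an equivalence relation on `{0,…,n}` that is a bisimulation. -/
structure LineCong (n : ℕ) : Type where
  rel : ℕ → ℕ → Prop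
  refl : ∀ x, x ≤ n → rel x x
  symm : ∀ {x y}, rel x y → rel y x
  trans : ∀ {x y z}, rel x y → rel y z → rel x z
  dom : ∀ {x y}, rel x y → x ≤ n ∧ y ≤ n
  bisim : ∀ {x x' y}, rel x' x → lineR n x y → ∃ y', lineR n x' y' ∧ rel y' y

/-- The equivalence class `x/θ`. -/
def cls {n : ℕ} (θ : LineCong n) (x : ℕ) : Set ℕ := {y | θ.rel x y}

/-- The set of equivalence classes of `θ`. -/
def classes {n : ℕ} (θ : LineCong n) : Set (Set ℕ) := {S | ∃ x, x ≤ n ∧ S = cls θ x}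

/-- `qrel θ x y` holds iff `x/θ R_θ y/θ` in the quotient frame. -/
def qrel {n : ℕ} (θ : LineCong n) (x y : ℕ) : Prop :=
  ∃ x' y', θ.rel x' x ∧ θ.rel y' y ∧ lineR n x' y'

/-- `vq θ x` is the number of `R_θ`-successor classes of `x/θ` in the quotient frame. -/
noncomputable def vq {n : ℕ} (θ : LineCong n) (x : ℕ) : ℕ :=
  {S : Set ℕ | ∃ y, qrel θ x y ∧ S = cls θ y}.ncard

/-- `θ` is trivial: it has exactly one class. -/
def TrivialCong {n : ℕ} (θ : LineCong n) : Prop := ∀ x y, x ≤ n → y ≤ n → θ.rel x y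

/-- The step of `θ`: the number of classes minus one. -/
noncomputable def stepC {n : ℕ} (θ : LineCong n) : ℕ := (classes θ).ncard - 1

/-- `e` is an extreme of `θ`: its class is an endpoint of the quotient line. -/
def IsExtremeC {n : ℕ} (θ : LineCong n) (e : ℕ) : Prop := e ≤ n ∧ vq θ e ≤ 2

/-- The join of two congruences: the transitive closure of their union. -/
def joinRel {n : ℕ} (θ δ : LineCong n) : ℕ → ℕ → Prop :=
  Relation.TransGen (fun x y => θ.rel x y ∨ δ.rel x y)

/-- Inclusion of congruences. -/
def LeCong {n : ℕ} (θ δ : LineCong n) : Prop := ∀ x y, θ.rel x y → δ.rel x y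

/-- The frequency of `θ` : `|ext(θ)| - (number of rests) - 1`. -/
noncomputable def freqC {n : ℕ} (θ : LineCong n) : ℕ :=
  {e | IsExtremeC θ e}.ncard - {r | θ.rel r (r + 1)}.ncard - 1

/-- `Δ_r̄(x) = |{i : r_i < x}|`. -/
def deltaFn (m : ℕ) (r : Fin m → ℕ) (x : ℤ) : ℤ :=
  ((Finset.univ.filter (fun i => (r i : ℤ) < x)).card : ℤ)

/-- The relation `⟨k; r̄⟩` on `ℤ`:
`x ∼ y ↔ x - Δ(x) ≡ ±(y - Δ(y)) (mod 2k)`. -/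
def conr (k m : ℕ) (r : Fin m → ℕ) (x y : ℤ) : Prop :=
  x - deltaFn m r x ≡ y - deltaFn m r y [ZMOD (2 * (k : ℤ))] ∨
  x - deltaFn m r x ≡ -(y - deltaFn m r y) [ZMOD (2 * (k : ℤ))]


namespace S16

variable {n k m : ℕ} {r : Fin m → ℕ}

lemma delta_nonneg (x : ℤ) : 0 ≤ deltaFn m r x := by
  simp [deltaFn]

lemma delta_low {x : ℤ} (hx : x ≤ 0) : deltaFn m r x = 0 := by
  unfold deltaFn
  norm_cast
  rw [Finset.card_eq_zero, Finset.filter_eq_empty_iff]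
  intro i _
  have : (0:ℤ) ≤ (r i : ℤ) := by positivity
  omega

lemma delta_high (hrn : ∀ i, r i + 1 ≤ n) {x : ℤ} (hx : (n:ℤ) ≤ x) :
    deltaFn m r x = m := by
  unfold deltaFn
  norm_cast
  rw [Finset.filter_true_of_mem, Finset.card_univ, Fintype.card_fin]
  intro i _
  have := hrn i
  have : ((r i : ℤ)) + 1 ≤ (n:ℤ) := by exact_mod_cast this
  omega

lemma delta_mono {x y : ℤ} (h : x ≤ y) : deltaFn m r x ≤ deltaFn m r y := by
  unfold deltaFn
  norm_cast
  apply Finset.card_le_card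
  intro i hi
  simp only [Finset.mem_filter, Finset.mem_univ, true_and] at hi ⊢
  linarith

lemma delta_step (hr : Function.Injective r) (x : ℤ) :
    deltaFn m r (x + 1) ≤ deltaFn m r x + 1 := by
  unfold deltaFn
  norm_cast
  have hsub : (Finset.univ.filter (fun i => (r i : ℤ) < x + 1)) ⊆
      (Finset.univ.filter (fun i => (r i : ℤ) < x)) ∪
      (Finset.univ.filter (fun i => (r i : ℤ) = x)) := by
    intro i hi
    simp only [Finset.mem_filter, Finset.mem_union, Finset.mem_univ, true_and] at *
    omega
  calc (Finset.univ.filter (fun i => (r i : ℤ) < x + 1)).card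
      ≤ _ := Finset.card_le_card hsub
    _ ≤ _ := Finset.card_union_le _ _
    _ ≤ (Finset.univ.filter (fun i => (r i : ℤ) < x)).card + 1 := by
        gcongr
        apply Finset.card_le_one.mpr
        intro a ha b hb
        simp only [Finset.mem_filter] at ha hb
        apply hr
        have : ((r a : ℤ)) = (r b : ℤ) := by omega
        exact_mod_cast this

lemma delta_le (hr : Function.Injective r) {x : ℤ} (hx : 0 ≤ x) :
    deltaFn m r x ≤ x := by
  unfold deltaFn
  have : (Finset.univ.filter (fun i => (r i : ℤ) < x)).card ≤ x.toNat := by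
    rw [← Finset.card_range x.toNat]
    apply Finset.card_le_card_of_injOn (fun i => r i)
    · intro i hi
      simp only [Finset.mem_coe, Finset.mem_filter] at hi
      simp only [Finset.mem_coe, Finset.mem_range]
      have : (r i : ℤ) < (x.toNat : ℤ) := by rw [Int.toNat_of_nonneg hx]; exact hi.2
      exact_mod_cast this
    · intro a _ b _ hab
      exact hr hab
  calc ((Finset.univ.filter (fun i => (r i : ℤ) < x)).card : ℤ) ≤ (x.toNat : ℤ) := by
        exact_mod_cast this
    _ = x := Int.toNat_of_nonneg hx

lemma delta_mirror (hr : Function.Injective r) (hrn : ∀ i, r i + 1 ≤ n)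
    (hmir : ∀ x : ℕ, (∃ i, r i = x) ↔ (∃ j, r j + x + 1 = n)) (x : ℤ) :
    deltaFn m r ((n:ℤ) - x) = m - deltaFn m r x := by
  have hex : ∀ i, ∃ j, r j + r i + 1 = n := fun i => (hmir (r i)).mp ⟨i, rfl⟩
  choose σ hσ using hex
  have hσinv : ∀ i, σ (σ i) = i := by
    intro i
    apply hr
    have h1 := hσ i; have h2 := hσ (σ i)
    omega
  have hcard : (Finset.univ.filter (fun i => (r i : ℤ) < (n:ℤ) - x)).card =
      (Finset.univ.filter (fun i => ¬ ((r i : ℤ) < x))).card := by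
    apply Finset.card_bij' (fun i _ => σ i) (fun i _ => σ i)
    · intro i hi
      simp only [Finset.mem_filter, Finset.mem_univ, true_and] at *
      have h1 := hσ i
      have : ((r (σ i) : ℤ)) + (r i : ℤ) + 1 = (n : ℤ) := by exact_mod_cast h1
      omega
    · intro i hi
      simp only [Finset.mem_filter, Finset.mem_univ, true_and] at *
      have h1 := hσ i
      have : ((r (σ i) : ℤ)) + (r i : ℤ) + 1 = (n : ℤ) := by exact_mod_cast h1
      omega
    · intro i _; exact hσinv i
    · intro i _; exact hσinv i
  have hsplit := Finset.card_filter_add_card_filter_not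
    (s := (Finset.univ : Finset (Fin m))) (p := fun i => (r i : ℤ) < x)
  unfold deltaFn
  rw [hcard]
  simp only [Finset.card_univ, Fintype.card_fin] at hsplit
  omega

lemma dvd_small {k e : ℤ} (hk : 0 < k) (h : 2*k ∣ e) (h1 : -(2*k) < e) (h2 : e < 2*k) :
    e = 0 := by
  rcases lt_trichotomy e 0 with h3 | h3 | h3
  · have := Int.le_of_dvd (by omega) (dvd_neg.mpr h); omega
  · exact h3
  · have := Int.le_of_dvd h3 h; omega

lemma dvd_odd' {k e : ℤ} (h : 2*k ∣ e) (he : ¬ ((2:ℤ) ∣ e)) : False :=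
  he (dvd_trans ⟨k, rfl⟩ h)

lemma endgame {k d' C e1 e2 : ℤ} (hk : 0 < k) (hd0 : 0 < d') (hdk : d' < k)
    (hmodC : C ≡ d' [ZMOD 2*k] ∨ C ≡ -d' [ZMOD 2*k])
    (h1 : e1 = C ∨ e1 = C - 1)
    (hm1 : e1 ≡ d' + 1 [ZMOD 2*k] ∨ e1 ≡ -(d'+1) [ZMOD 2*k])
    (h2 : e2 = C ∨ e2 = C - 1)
    (hm2 : e2 ≡ d' - 1 [ZMOD 2*k] ∨ e2 ≡ -(d'-1) [ZMOD 2*k]) : False := by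
  have hk2 : 2 ≤ k := by omega
  have step : ∀ a b : ℤ, C ≡ a [ZMOD 2*k] → C ≡ b [ZMOD 2*k] → 2*k ∣ (b - a) :=
    fun a b hA hB => (hA.symm.trans hB).dvd
  have shift : ∀ e b : ℤ, e = C - 1 → e ≡ b [ZMOD 2*k] → C ≡ b + 1 [ZMOD 2*k] := by
    intro e b he hb
    subst he
    have := Int.ModEq.add_right 1 hb
    simpa using this
  rcases hmodC with hA | hA
  · -- C ≡ d' : kill with pair 1
    rcases h1 with rfl | he
    · rcases hm1 with hB | hB
      · have h0 := dvd_small hk (step _ _ hA hB) (by omega) (by omega); omega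
      · exact dvd_odd' (step _ _ hA hB) (by omega)
    · rcases hm1 with hB | hB
      · have h0 := dvd_small hk (step _ _ hA (shift _ _ he hB)) (by omega) (by omega); omega
      · have h0 := dvd_small hk (step _ _ hA (shift _ _ he hB)) (by omega) (by omega); omega
  · -- C ≡ -d' : kill with pair 2
    rcases h2 with rfl | he
    · rcases hm2 with hB | hB
      · exact dvd_odd' (step _ _ hA hB) (by omega)
      · have h0 := dvd_small hk (step _ _ hA hB) (by omega) (by omega); omega
    · rcases hm2 with hB | hB
      · have h0 := dvd_small hk (step _ _ hA (shift _ _ he hB)) (by omega) (by omega); omega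
      · have h0 := dvd_small hk (step _ _ hA (shift _ _ he hB)) (by omega) (by omega); omega

lemma key (n k m : ℕ) (hk : 0 < k) (r : Fin m → ℕ) (hr : StrictMono r)
    (hrn : ∀ i, r i + 1 ≤ n) (θ : LineCong n)
    (hθ : ∀ x y : ℕ, θ.rel x y ↔ (x ≤ n ∧ y ≤ n ∧ conr k m r (x : ℤ) (y : ℤ))) :
    (k:ℤ) ∣ ((n:ℤ) - m) ∨ ((n:ℤ) - m) < k := by
  classical
  by_contra hcon
  push_neg at hcon
  obtain ⟨hdvd, hkC⟩ := hcon
  have hinj : Function.Injective r := hr.injective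
  set F : ℕ → ℤ := fun x => (x:ℤ) - deltaFn m r x with hF
  set C : ℤ := (n:ℤ) - m with hCdef
  have hF0 : F 0 = 0 := by simp [hF, delta_low (le_refl (0:ℤ))]
  have hFn : F n = C := by simp [hF, delta_high hrn (le_refl ((n:ℕ):ℤ)), hCdef]
  have hstep : ∀ x : ℕ, F (x+1) = F x ∨ F (x+1) = F x + 1 := by
    intro x
    have h1 := delta_mono (r := r) (show (x:ℤ) ≤ (x:ℤ)+1 by omega)
    have h2 := delta_step (m := m) hinj (x:ℤ)
    have h3 : ((x+1 : ℕ):ℤ) = (x:ℤ)+1 := by push_cast; ring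
    simp only [hF, h3]
    omega
  have hsurj : ∀ j : ℕ, ∀ v : ℤ, 0 ≤ v → v ≤ F j → ∃ x ≤ j, F x = v := by
    intro j
    induction j with
    | zero => intro v h1 h2; exact ⟨0, le_rfl, by rw [hF0] at *; omega⟩
    | succ p ih =>
      intro v h1 h2
      rcases le_or_gt v (F p) with h | h
      · obtain ⟨x, hx1, hx2⟩ := ih v h1 h
        exact ⟨x, by omega, hx2⟩
      · refine ⟨p+1, le_rfl, ?_⟩
        rcases hstep p with h' | h' <;> omega
  have hn1 : 1 ≤ n := by
    have h0 : (0:ℤ) ≤ (m:ℤ) := by positivity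
    have : (1:ℤ) ≤ (n:ℤ) := by omega
    exact_mod_cast this
  set N : ℤ := 2 * (k:ℤ) with hN
  have hkpos : (0:ℤ) < k := by exact_mod_cast hk
  have hNpos : 0 < N := by omega
  set d : ℤ := C % N with hd
  have hd0 : 0 ≤ d := Int.emod_nonneg _ (by omega)
  have hdN : d < N := Int.emod_lt_of_pos _ hNpos
  have hCd : C ≡ d [ZMOD N] := (Int.emod_emod_of_dvd C dvd_rfl).symm
  have hdne0 : d ≠ 0 := by
    intro h
    apply hdvd
    have hNC : N ∣ C := Int.dvd_of_emod_eq_zero (by rw [← hd]; exact h)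
    exact dvd_trans ⟨2, by ring⟩ hNC
  have hdnek : d ≠ k := by
    intro h
    apply hdvd
    have h2 : N ∣ (d - C) := hCd.dvd
    have h3 : (k:ℤ) ∣ (d - C) := dvd_trans ⟨2, by ring⟩ h2
    have h4 : (k:ℤ) ∣ d := h ▸ dvd_rfl
    have h5 := dvd_sub h4 h3
    have h6 : d - (d - C) = C := by ring
    rwa [h6] at h5
  set d' : ℤ := min d (N - d) with hd'
  have hd'pos : 0 < d' := by omega
  have hd'k : d' < k := by omega
  have hmodC : C ≡ d' [ZMOD N] ∨ C ≡ -d' [ZMOD N] := by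
    rcases min_cases d (N - d) with ⟨h1, _⟩ | ⟨h1, _⟩
    · left; rw [hd', h1]; exact hCd
    · right; rw [hd', h1]
      refine hCd.trans (Int.modEq_iff_dvd.mpr ?_)
      exact ⟨-1, by rw [hN]; ring⟩
  obtain ⟨w, hw1, hw2⟩ := hsurj n d' (le_of_lt hd'pos) (by rw [hFn]; omega)
  -- least witness
  have hex : ∃ x, F x = d' := ⟨w, hw2⟩
  set x0 := Nat.find hex with hx0def
  have hx0F : F x0 = d' := Nat.find_spec hex
  have hx0n : x0 ≤ n := le_trans (Nat.find_min' hex hw2) hw1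
  have hx0pos : 0 < x0 := by
    rcases Nat.eq_zero_or_pos x0 with h | h
    · exfalso; rw [h, hF0] at hx0F; omega
    · exact h
  have hx0pred : F (x0 - 1) = d' - 1 := by
    have h1 : x0 - 1 < x0 := by omega
    have h2 : ¬ F (x0 - 1) = d' := Nat.find_min hex h1
    have h3 := hstep (x0 - 1)
    rw [show x0 - 1 + 1 = x0 by omega] at h3
    omega
  -- greatest witness
  set x1 := Nat.findGreatest (fun x => F x = d') n with hx1def
  have hx1F : F x1 = d' := Nat.findGreatest_spec (P := fun x => F x = d') hw1 hw2
  have hx1n : x1 ≤ n := Nat.findGreatest_le n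
  have hx1lt : x1 < n := by
    rcases lt_or_eq_of_le hx1n with h | h
    · exact h
    · exfalso; rw [h, hFn] at hx1F; omega
  have hx1succ : F (x1 + 1) = d' + 1 := by
    have h2 : ¬ (F (x1+1) = d') :=
      Nat.findGreatest_is_greatest (P := fun x => F x = d')
        (show Nat.findGreatest (fun x => F x = d') n < x1 + 1 by omega) (by omega)
    have h3 := hstep x1
    omega
  -- θ relates n to x0 and x1
  have hreln : ∀ x : ℕ, x ≤ n → (F x ≡ C [ZMOD N] ∨ F x ≡ -C [ZMOD N]) → θ.rel n x := by
    intro x hx h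
    rw [hθ]
    refine ⟨le_rfl, hx, ?_⟩
    have goal : F n ≡ F x [ZMOD N] ∨ F n ≡ -(F x) [ZMOD N] := by
      rw [hFn]
      rcases h with h | h
      · exact Or.inl h.symm
      · right
        have := Int.ModEq.neg h
        rw [neg_neg] at this
        exact this.symm
    exact goal
  have hCd' : F x1 ≡ C [ZMOD N] ∨ F x1 ≡ -C [ZMOD N] := by
    rw [hx1F]
    rcases hmodC with h | h
    · exact Or.inl h.symm
    · right
      have := Int.ModEq.neg h
      rw [neg_neg] at this
      exact this.symm
  have hCd'0 : F x0 ≡ C [ZMOD N] ∨ F x0 ≡ -C [ZMOD N] := by rw [hx0F, ← hx1F]; exact hCd'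
  have hrel1 : θ.rel n x1 := hreln x1 hx1n hCd'
  have hrel0 : θ.rel n x0 := hreln x0 hx0n hCd'0
  -- bisimulation instances
  obtain ⟨y1, hy1l, hy1r⟩ := θ.bisim hrel1
    (show lineR n x1 (x1+1) from ⟨hx1n, by omega, by omega, by omega⟩)
  obtain ⟨y2, hy2l, hy2r⟩ := θ.bisim hrel0
    (show lineR n x0 (x0-1) from ⟨hx0n, by omega, by omega, by omega⟩)
  have hy1n : y1 = n ∨ y1 = n - 1 := by
    obtain ⟨_, h2, h3, _⟩ := hy1l; omega
  have hy2n : y2 = n ∨ y2 = n - 1 := by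
    obtain ⟨_, h2, h3, _⟩ := hy2l; omega
  have hy1m : F y1 ≡ d' + 1 [ZMOD N] ∨ F y1 ≡ -(d' + 1) [ZMOD N] := by
    rw [hθ] at hy1r
    obtain ⟨_, _, hc⟩ := hy1r
    have hc' : F y1 ≡ F (x1+1) [ZMOD N] ∨ F y1 ≡ -(F (x1+1)) [ZMOD N] := hc
    rw [hx1succ] at hc'
    exact hc'
  have hy2m : F y2 ≡ d' - 1 [ZMOD N] ∨ F y2 ≡ -(d' - 1) [ZMOD N] := by
    rw [hθ] at hy2r
    obtain ⟨_, _, hc⟩ := hy2r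
    have hc' : F y2 ≡ F (x0-1) [ZMOD N] ∨ F y2 ≡ -(F (x0-1)) [ZMOD N] := hc
    rw [hx0pred] at hc'
    exact hc'
  -- values of F at n and n-1
  have hFn1 : F (n-1) = C ∨ F (n-1) = C - 1 := by
    have h3 := hstep (n-1)
    rw [show n - 1 + 1 = n by omega, hFn] at h3
    omega
  have hv1 : F y1 = C ∨ F y1 = C - 1 := by
    rcases hy1n with rfl | rfl
    · rw [hFn]; exact Or.inl rfl
    · exact hFn1
  have hv2 : F y2 = C ∨ F y2 = C - 1 := by
    rcases hy2n with rfl | rfl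
    · rw [hFn]; exact Or.inl rfl
    · exact hFn1
  exact endgame hkpos hd'pos hd'k hmodC hv1 hy1m hv2 hy2m


lemma conr_mirror (hk : 0 < k) (hinj : Function.Injective r)
    (hrn : ∀ i, r i + 1 ≤ n)
    (hmir : ∀ x : ℕ, (∃ i, r i = x) ↔ (∃ j, r j + x + 1 = n))
    (hkey : (k:ℤ) ∣ ((n:ℤ) - m) ∨ ((n:ℤ) - m) < k)
    {x y : ℤ} (hx0 : 0 ≤ x) (hxn : x ≤ n) (hy0 : 0 ≤ y) (hyn : y ≤ n)
    (h : conr k m r x y) : conr k m r ((n:ℤ) - x) ((n:ℤ) - y) := by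
  have hkpos : (0:ℤ) < k := by exact_mod_cast hk
  have hdx := delta_mirror hinj hrn hmir x
  have hdy := delta_mirror hinj hrn hmir y
  set C : ℤ := (n:ℤ) - m with hC
  have hGx : (n:ℤ) - x - deltaFn m r ((n:ℤ)-x) = C - (x - deltaFn m r x) := by
    rw [hdx, hC]; ring
  have hGy : (n:ℤ) - y - deltaFn m r ((n:ℤ)-y) = C - (y - deltaFn m r y) := by
    rw [hdy, hC]; ring
  rcases h with h | h
  · left
    unfold conr at *
    rw [hGx, hGy]
    exact Int.ModEq.sub (Int.ModEq.refl C) h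
  · -- minus case
    have h2 : 2*(k:ℤ) ∣ (x - deltaFn m r x) + (y - deltaFn m r y) := by
      have h3 := h.dvd
      have h4 : -(y - deltaFn m r y) - (x - deltaFn m r x)
          = -((x - deltaFn m r x) + (y - deltaFn m r y)) := by ring
      rw [h4] at h3
      exact dvd_neg.mp h3
    rcases hkey with hdvd | hlt
    · right
      rw [hGx, hGy]
      rw [Int.modEq_iff_dvd]
      have h5 : -(C - (y - deltaFn m r y)) - (C - (x - deltaFn m r x))
          = ((x - deltaFn m r x) + (y - deltaFn m r y)) - 2*C := by ring
      rw [h5]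
      exact dvd_sub h2 (by rw [hC]; exact mul_dvd_mul_left 2 hdvd)
    · -- C < k : classes don't fold
      have hb1 : 0 ≤ x - deltaFn m r x := by
        have := delta_le hinj hx0; omega
      have hb2 : 0 ≤ y - deltaFn m r y := by
        have := delta_le hinj hy0; omega
      have hb3 : x - deltaFn m r x ≤ C := by
        have h5 := delta_le hinj (show (0:ℤ) ≤ (n:ℤ) - x by omega)
        rw [hdx] at h5
        omega
      have hb4 : y - deltaFn m r y ≤ C := by
        have h5 := delta_le hinj (show (0:ℤ) ≤ (n:ℤ) - y by omega)
        rw [hdy] at h5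
        omega
      have hsum0 : (x - deltaFn m r x) + (y - deltaFn m r y) = 0 :=
        dvd_small hkpos h2 (by omega) (by omega)
      left
      rw [hGx, hGy]
      have heq : x - deltaFn m r x = y - deltaFn m r y := by omega
      rw [heq]

end S16

/-- A mirrored congruence `θ = ⟨k; r̄⟩` permutes with the frequency-2 congruence
(`a δ b ↔ a = b ∨ a + b = n`). -/
theorem stmt_16 (n k m : ℕ) (hk : 0 < k) (r : Fin m → ℕ) (hr : StrictMono r)
    (hrn : ∀ i, r i + 1 ≤ n)
    (θ : LineCong n)
    (hθ : ∀ x y : ℕ, θ.rel x y ↔ (x ≤ n ∧ y ≤ n ∧ conr k m r (x : ℤ) (y : ℤ)))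
    (hmir : ∀ x : ℕ, (∃ i, r i = x) ↔ (∃ j, r j + x + 1 = n))
    (δ : LineCong n)
    (hδ : ∀ a b : ℕ, δ.rel a b ↔ (a ≤ n ∧ b ≤ n ∧ (a = b ∨ a + b = n))) :
    ∀ a c : ℕ, (∃ b, θ.rel a b ∧ δ.rel b c) ↔ (∃ b, δ.rel a b ∧ θ.rel b c) := by
  have hinj : Function.Injective r := hr.injective
  have hkey := S16.key n k m hk r hr hrn θ hθ
  have main : ∀ a c : ℕ, (∃ b, θ.rel a b ∧ δ.rel b c) → (∃ b, δ.rel a b ∧ θ.rel b c) := by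
    rintro a c ⟨b, hab, hbc⟩
    rw [hδ] at hbc
    obtain ⟨hbn, hcn, hbc'⟩ := hbc
    rw [hθ] at hab
    obtain ⟨han, hbn', hconr⟩ := hab
    rcases hbc' with rfl | hsum
    · exact ⟨a, (hδ a a).mpr ⟨han, han, Or.inl rfl⟩, (hθ a b).mpr ⟨han, hbn, hconr⟩⟩
    · refine ⟨n - a, (hδ a (n-a)).mpr ⟨han, by omega, Or.inr (by omega)⟩, ?_⟩
      rw [hθ]
      refine ⟨by omega, hcn, ?_⟩
      have hcast1 : ((n - a : ℕ) : ℤ) = (n:ℤ) - (a:ℤ) := by omega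
      have hcast2 : (c : ℤ) = (n:ℤ) - (b:ℤ) := by omega
      rw [hcast1, hcast2]
      have ha' : ((a:ℤ)) ≤ (n:ℤ) := by exact_mod_cast han
      have hb' : ((b:ℤ)) ≤ (n:ℤ) := by exact_mod_cast hbn
      exact S16.conr_mirror hk hinj hrn hmir hkey (by positivity) ha' (by positivity) hb' hconr
  intro a c
  constructor
  · exact main a c
  · rintro ⟨b, hab, hbc⟩
    obtain ⟨b', h1, h2⟩ := main c a ⟨b, θ.symm hbc, δ.symm hab⟩
    exact ⟨b', θ.symm h2, δ.symm h1⟩
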